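/- Let n ≥ 3 and let w = (w_1,…,w_n) ∈ ℝ_{>0}^n satisfy w_1 + ⋯ + w_n = 2, w_n < 1, and w_i + w_n > 1 for all i = 1,…,n−1. Let S be the set of (x_1,…,x_n) ∈ (ℙ¹(ℂ))^n such that for every point p ∈ ℙ¹(ℂ) one has Σ_{i : x_i = p} w_i < 1. Then (a) S equals the set of (x_1,…,x_n) such that x_i ≠ x_n for all i = 1,…,n−1 and the points x_1,…,x_{n−1} are not all equal; and (b) the quotient of S by the diagonal action of GL(2,ℂ) is in bijection with the complex projective space of dimension n−3 (the projectivization of ℂ^{n−2}). -/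

import Mathlib

noncomputable section

open Matrix

/-- The complex projective line, as the projectivization of `ℂ²`. -/
abbrev P1 : Type := Projectivization ℂ (Fin 2 → ℂ)

/-- The group `GL(2,ℂ)`. -/
abbrev GL2 : Type := Matrix.GeneralLinearGroup (Fin 2) ℂ

lemma glLin_injective (A : GL2) :
    Function.Injective (Matrix.toLin' (A : Matrix (Fin 2) (Fin 2) ℂ)) := by
  have h : ∀ v, Matrix.toLin' ((A⁻¹ : GL2) : Matrix (Fin 2) (Fin 2) ℂ)
      (Matrix.toLin' ((A : GL2) : Matrix (Fin 2) (Fin 2) ℂ) v) = v := by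
    intro v
    rw [← Matrix.toLin'_mul_apply, Units.inv_mul, Matrix.toLin'_one, LinearMap.id_apply]
  exact Function.LeftInverse.injective h

/-- The action of `GL(2,ℂ)` on the projective line via projectivized linear maps. -/
def glAct (A : GL2) : P1 → P1 :=
  Projectivization.map (Matrix.toLin' (A : Matrix (Fin 2) (Fin 2) ℂ)) (glLin_injective A)

lemma glAct_one (x : P1) : glAct 1 x = x := by
  induction x using Projectivization.ind with
  | h v hv => rw [glAct, Projectivization.map_mk]; simp

lemma glAct_mul (A B : GL2) (x : P1) : glAct A (glAct B x) = glAct (A * B) x := by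
  induction x using Projectivization.ind with
  | h v hv =>
    rw [glAct, glAct, glAct, Projectivization.map_mk, Projectivization.map_mk,
      Projectivization.map_mk]
    congr 1
    rw [← Matrix.toLin'_mul_apply]
    rfl

/-- The orbit equivalence for the diagonal `GL(2,ℂ)`-action on a subset of
`(ℙ¹(ℂ))^n`. -/
def glSetoid {n : ℕ} (S : Set (Fin n → P1)) : Setoid S where
  r x y := ∃ A : GL2, ∀ i, glAct A (x.1 i) = y.1 i
  iseqv := by
    constructor
    · intro x; exact ⟨1, fun i => glAct_one _⟩
    · rintro x y ⟨A, h⟩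
      refine ⟨A⁻¹, fun i => ?_⟩
      rw [← h i, glAct_mul, inv_mul_cancel, glAct_one]
    · rintro x y z ⟨A, h⟩ ⟨B, h'⟩
      refine ⟨B * A, fun i => ?_⟩
      rw [← glAct_mul, h i, h' i]
open scoped Classical in
/-- The set of `w`-stable configurations of `n` points on `ℙ¹(ℂ)`. -/
def stableSet (n : ℕ) (w : Fin n → ℝ) : Set (Fin n → P1) :=
  { x | ∀ p : P1, ∑ i ∈ Finset.univ.filter (fun i => x i = p), w i < 1 }

lemma vne (z : ℂ) : ![z, (1:ℂ)] ≠ 0 := by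
  intro h; have := congrFun h 1; simp at this

def pt (z : ℂ) : P1 := Projectivization.mk ℂ ![z, 1] (vne z)

lemma infne : ![(1:ℂ), 0] ≠ 0 := by intro h; have := congrFun h 0; simp at this

def inf : P1 := Projectivization.mk ℂ ![1, 0] infne

lemma pt_injective : Function.Injective pt := by
  intro a b h
  rw [pt, pt, Projectivization.mk_eq_mk_iff'] at h
  obtain ⟨c, hc⟩ := h
  have h0 := congrFun hc 0
  have h1 := congrFun hc 1
  simp at h0 h1
  subst h1; simpa using h0.symm

lemma pt_ne_inf (z : ℂ) : pt z ≠ inf := by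
  intro h
  rw [pt, inf, Projectivization.mk_eq_mk_iff'] at h
  obtain ⟨c, hc⟩ := h
  have h1 := congrFun hc 1
  simp at h1

lemma glAct_mk (A : GL2) (v : Fin 2 → ℂ) (hv : v ≠ 0) :
    glAct A (Projectivization.mk ℂ v hv) =
      Projectivization.mk ℂ ((A : Matrix (Fin 2) (Fin 2) ℂ) *ᵥ v)
        (by
          intro h0
          exact hv (glLin_injective A (by
            rw [map_zero, Matrix.toLin'_apply]; exact h0))) := by
  rw [glAct, Projectivization.map_mk]
  exact (Projectivization.mk_eq_mk_iff' ℂ _ _ _ _).2 ⟨1, by simp [Matrix.toLin'_apply]⟩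

lemma exists_pt (p : P1) (hp : p ≠ inf) : ∃ z : ℂ, p = pt z := by
  induction p using Projectivization.ind with
  | h v hv =>
    by_cases h1 : v 1 = 0
    · exfalso
      apply hp
      rw [inf]
      refine (Projectivization.mk_eq_mk_iff' ℂ _ _ _ _).2 ⟨v 0, ?_⟩
      funext i; fin_cases i <;> simp [h1]
    · refine ⟨v 0 / v 1, ?_⟩
      rw [pt]
      refine (Projectivization.mk_eq_mk_iff' ℂ _ _ _ _).2 ⟨v 1, ?_⟩
      funext i; fin_cases i <;> simp <;> field_simp

lemma glAct_inv_eq (A : GL2) {p q : P1} (h : glAct A p = q) : glAct A⁻¹ q = p := by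
  rw [← h, glAct_mul, inv_mul_cancel, glAct_one]

lemma glAct_injective (A : GL2) : Function.Injective (glAct A) := by
  intro p q h
  have := congrArg (glAct A⁻¹) h
  rwa [glAct_mul, glAct_mul, inv_mul_cancel, glAct_one, glAct_one] at this

lemma det_ne_zero' (A : GL2) : ((A : Matrix (Fin 2) (Fin 2) ℂ)).det ≠ 0 :=
  ((Matrix.isUnit_iff_isUnit_det _).1 A.isUnit).ne_zero

def aff (a b : ℂ) (ha : a ≠ 0) : GL2 :=
  Matrix.GeneralLinearGroup.mkOfDetNeZero !![a, b; 0, 1]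
    (by simp [Matrix.det_fin_two_of, ha])

lemma aff_coe (a b : ℂ) (ha : a ≠ 0) :
    ((aff a b ha : GL2) : Matrix (Fin 2) (Fin 2) ℂ) = !![a, b; 0, 1] := rfl

lemma coe_mkdet (M : Matrix (Fin 2) (Fin 2) ℂ) (h : M.det ≠ 0) :
    ((Matrix.GeneralLinearGroup.mkOfDetNeZero M h : GL2) : Matrix (Fin 2) (Fin 2) ℂ) = M := rfl

lemma aff_pt (a b z : ℂ) (ha : a ≠ 0) : glAct (aff a b ha) (pt z) = pt (a * z + b) := by
  rw [pt, pt, glAct_mk]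
  refine (Projectivization.mk_eq_mk_iff' ℂ _ _ _ _).2 ⟨1, ?_⟩
  funext i
  fin_cases i <;> simp [aff, coe_mkdet, Matrix.mulVec, dotProduct, Fin.sum_univ_two]

lemma aff_inf (a b : ℂ) (ha : a ≠ 0) : glAct (aff a b ha) inf = inf := by
  rw [inf, glAct_mk]
  refine (Projectivization.mk_eq_mk_iff' ℂ _ _ _ _).2 ⟨a, ?_⟩
  funext i
  fin_cases i <;> simp [aff, coe_mkdet, Matrix.mulVec, dotProduct, Fin.sum_univ_two]

lemma fix_inf (C : GL2) (h : glAct C inf = inf) :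
    ∃ a b : ℂ, a ≠ 0 ∧ ∀ w : ℂ, glAct C (pt w) = pt (a * w + b) := by
  rw [inf, glAct_mk] at h
  rw [Projectivization.mk_eq_mk_iff'] at h
  obtain ⟨c, hc⟩ := h
  have h1 := congrFun hc 1
  simp [Matrix.mulVec, dotProduct, Fin.sum_univ_two] at h1
  have h1' : (C : Matrix (Fin 2) (Fin 2) ℂ) 1 0 = 0 := h1.symm
  have hdet : ((C : Matrix (Fin 2) (Fin 2) ℂ)).det ≠ 0 := det_ne_zero' C
  rw [Matrix.det_fin_two] at hdet
  have h11 : (C : Matrix (Fin 2) (Fin 2) ℂ) 1 1 ≠ 0 := by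
    intro h0; apply hdet; rw [h0, h1']; ring
  have h00 : (C : Matrix (Fin 2) (Fin 2) ℂ) 0 0 ≠ 0 := by
    intro h0; apply hdet; rw [h0, h1']; ring
  refine ⟨(C : Matrix (Fin 2) (Fin 2) ℂ) 0 0 / (C : Matrix (Fin 2) (Fin 2) ℂ) 1 1,
    (C : Matrix (Fin 2) (Fin 2) ℂ) 0 1 / (C : Matrix (Fin 2) (Fin 2) ℂ) 1 1,
    div_ne_zero h00 h11, fun w => ?_⟩
  rw [pt, pt, glAct_mk]
  refine (Projectivization.mk_eq_mk_iff' ℂ _ _ _ _).2 ⟨(C : Matrix (Fin 2) (Fin 2) ℂ) 1 1, ?_⟩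
  funext i
  fin_cases i <;>
    simp [Matrix.mulVec, dotProduct, Fin.sum_univ_two, h1'] <;> field_simp <;> ring

lemma exists_to_inf (p : P1) : ∃ A : GL2, glAct A p = inf := by
  induction p using Projectivization.ind with
  | h v hv =>
    by_cases h0 : v 0 ≠ 0
    · refine ⟨Matrix.GeneralLinearGroup.mkOfDetNeZero !![1, 0; -(v 1), v 0]
        (by simp [Matrix.det_fin_two_of, h0]), ?_⟩
      rw [glAct_mk, inf]
      refine (Projectivization.mk_eq_mk_iff' ℂ _ _ _ _).2 ⟨v 0, ?_⟩
      funext i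
      fin_cases i <;> simp [coe_mkdet, Matrix.mulVec, dotProduct, Fin.sum_univ_two] <;> ring
    · push_neg at h0
      have h1 : v 1 ≠ 0 := by
        intro h1; apply hv; funext i; fin_cases i <;> simp [h0, h1]
      refine ⟨Matrix.GeneralLinearGroup.mkOfDetNeZero !![0, 1; v 1, 0]
        (by simp [Matrix.det_fin_two_of, h1]), ?_⟩
      rw [glAct_mk, inf]
      refine (Projectivization.mk_eq_mk_iff' ℂ _ _ _ _).2 ⟨v 1, ?_⟩
      funext i
      fin_cases i <;> simp [coe_mkdet, Matrix.mulVec, dotProduct, Fin.sum_univ_two, h0] <;> ring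

lemma ltN1 (n : ℕ) (hn : 3 ≤ n) : n - 1 < n := by omega

section Inv
variable (n : ℕ) (hn : 3 ≤ n)

def uvec (z : Fin n → ℂ) : Fin (n-2) → ℂ :=
  fun j => z ⟨j.1, by omega⟩ - z ⟨n-2, by omega⟩

def NormRel (x : Fin n → P1) (q : Projectivization ℂ (Fin (n-2) → ℂ)) : Prop :=
  ∃ (A : GL2) (z : Fin n → ℂ) (h : uvec n hn z ≠ 0),
    glAct A (x ⟨n-1, ltN1 n hn⟩) = inf ∧
    (∀ i : Fin n, i ≠ ⟨n-1, ltN1 n hn⟩ → glAct A (x i) = pt (z i)) ∧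
    q = Projectivization.mk ℂ (uvec n hn z) h

variable {n hn} -- hn?

lemma uvec_eq_zero_iff (z : Fin n → ℂ) (hz : uvec n hn z = 0) :
    ∀ i : Fin n, i ≠ ⟨n-1, ltN1 n hn⟩ → z i = z ⟨n-2, by omega⟩ := by
  intro i hi
  have hiv : i.1 < n - 1 := by
    rcases lt_or_eq_of_le (Nat.lt_succ_iff.1 (by omega : i.1 < (n-1)+1)) with h | h
    · exact h
    · exact absurd (Fin.ext h) hi
  by_cases hm : i.1 = n - 2
  · exact congrArg z (Fin.ext hm)
  · have hj : i.1 < n - 2 := by omega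
    have := congrFun hz ⟨i.1, hj⟩
    simp [uvec] at this
    have h2 : (⟨i.1, by omega⟩ : Fin n) = i := rfl
    rw [sub_eq_zero] at this
    convert this using 2

lemma R_exists {x : Fin n → P1}
    (hne : ∀ i : Fin n, i ≠ ⟨n-1, ltN1 n hn⟩ → x i ≠ x ⟨n-1, ltN1 n hn⟩)
    (hnall : ¬ (∀ i j : Fin n, i ≠ (⟨n-1, ltN1 n hn⟩ : Fin n) → j ≠ (⟨n-1, ltN1 n hn⟩ : Fin n) →
      x i = x j)) : ∃ q, NormRel n hn x q := by
  obtain ⟨A, hA⟩ := exists_to_inf (x ⟨n-1, by omega⟩)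
  have hz : ∀ i : Fin n, ∃ zi : ℂ, i ≠ (⟨n-1, by omega⟩ : Fin n) → glAct A (x i) = pt zi := by
    intro i
    by_cases h : i = (⟨n-1, by omega⟩ : Fin n)
    · exact ⟨0, fun h' => absurd h h'⟩
    · obtain ⟨zi, hzi⟩ := exists_pt (glAct A (x i))
        (by rw [← hA]; exact fun hc => hne i h (glAct_injective A hc))
      exact ⟨zi, fun _ => hzi⟩
  choose z hzz using hz
  have hu : uvec n hn z ≠ 0 := by
    intro h0
    apply hnall
    intro i j hi hj
    have hzi := uvec_eq_zero_iff z h0 i hi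
    have hzj := uvec_eq_zero_iff z h0 j hj
    have : glAct A (x i) = glAct A (x j) := by
      rw [hzz i hi, hzz j hj, hzi, hzj]
    exact glAct_injective A this
  exact ⟨Projectivization.mk ℂ (uvec n hn z) hu, A, z, hu, hA, hzz, rfl⟩

lemma R_unique {x y : Fin n → P1} {q q' : Projectivization ℂ (Fin (n-2) → ℂ)}
    (hx : NormRel n hn x q) (hy : NormRel n hn y q')
    (hrel : ∃ B : GL2, ∀ i, glAct B (x i) = y i) : q = q' := by
  obtain ⟨A, z, hz, hAlast, hAz, rfl⟩ := hx
  obtain ⟨A', z', hz', hA'last, hA'z, rfl⟩ := hy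
  obtain ⟨B, hB⟩ := hrel
  set C : GL2 := A' * B * A⁻¹ with hC
  have hCp : ∀ p : P1, glAct C p = glAct A' (glAct B (glAct A⁻¹ p)) := by
    intro p; rw [glAct_mul, glAct_mul]
  have hCinf : glAct C inf = inf := by
    rw [hCp, glAct_inv_eq A hAlast, hB, hA'last]
  obtain ⟨a, b, ha, hab⟩ := fix_inf C hCinf
  have key : ∀ i : Fin n, i ≠ (⟨n-1, by omega⟩ : Fin n) → z' i = a * z i + b := by
    intro i hi
    apply pt_injective
    rw [← hA'z i hi, ← hab, hCp, glAct_inv_eq A (hAz i hi), hB]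
  have huv : uvec n hn z' = a • uvec n hn z := by
    funext j
    have hj1 : (⟨j.1, by omega⟩ : Fin n) ≠ (⟨n-1, by omega⟩ : Fin n) := by
      intro h; have := Fin.mk.injEq .. ▸ h
      simp only [Fin.mk.injEq] at h; omega
    have hj2 : (⟨n-2, by omega⟩ : Fin n) ≠ (⟨n-1, by omega⟩ : Fin n) := by
      simp only [ne_eq, Fin.mk.injEq]; omega
    simp only [uvec, Pi.smul_apply, smul_eq_mul, key _ hj1, key _ hj2]
    ring
  symm
  refine (Projectivization.mk_eq_mk_iff' ℂ _ _ _ _).2 ⟨a, ?_⟩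
  rw [huv]

lemma R_inj {x y : Fin n → P1} {q : Projectivization ℂ (Fin (n-2) → ℂ)}
    (hx : NormRel n hn x q) (hy : NormRel n hn y q) :
    ∃ B : GL2, ∀ i, glAct B (x i) = y i := by
  obtain ⟨A, z, hz, hAlast, hAz, rfl⟩ := hx
  obtain ⟨A', z', hz', hA'last, hA'z, hq⟩ := hy
  rw [Projectivization.mk_eq_mk_iff'] at hq
  obtain ⟨c, hc⟩ := hq
  have hcne : c ≠ 0 := by
    intro h0; apply hz; rw [← hc, h0, zero_smul]
  set a : ℂ := c⁻¹ with ha'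
  have ha : a ≠ 0 := inv_ne_zero hcne
  set b : ℂ := z' ⟨n-2, by omega⟩ - a * z ⟨n-2, by omega⟩ with hb
  have key : ∀ i : Fin n, i ≠ (⟨n-1, by omega⟩ : Fin n) → z' i = a * z i + b := by
    intro i hi
    have hiv : i.1 < n - 1 := by
      rcases lt_or_eq_of_le (Nat.lt_succ_iff.1 (by omega : i.1 < (n-1)+1)) with h | h
      · exact h
      · exact absurd (Fin.ext h) hi
    by_cases hm : i.1 = n - 2
    · have : i = (⟨n-2, by omega⟩ : Fin n) := Fin.ext hm
      rw [this, hb]; ring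
    · have hj : i.1 < n - 2 := by omega
      have := congrFun hc ⟨i.1, hj⟩
      simp only [Pi.smul_apply, smul_eq_mul, uvec] at this
      have h2 : (⟨i.1, by omega⟩ : Fin n) = i := rfl
      rw [h2] at this
      rw [hb]
      have : z i - z ⟨n-2, by omega⟩ = c * (z' i - z' ⟨n-2, by omega⟩) := this.symm
      rw [ha']
      have hcc : c⁻¹ * c = 1 := inv_mul_cancel₀ hcne
      linear_combination (-c⁻¹) * this - (z' i - z' ⟨n-2, by omega⟩) * hcc
  refine ⟨A'⁻¹ * (aff a b ha) * A, fun i => ?_⟩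
  have hstep : ∀ p : P1, glAct (A'⁻¹ * (aff a b ha) * A) p
      = glAct A'⁻¹ (glAct (aff a b ha) (glAct A p)) := by
    intro p; rw [glAct_mul, glAct_mul]
  by_cases hi : i = (⟨n-1, by omega⟩ : Fin n)
  · rw [hstep, hi, hAlast, aff_inf, glAct_inv_eq A' hA'last]
  · rw [hstep, hAz i hi, aff_pt, ← key i hi, glAct_inv_eq A' (hA'z i hi)]

end Inv

section
variable {n : ℕ}
lemma lt1 (hn : 3 ≤ n) : n - 1 < n := by omega
lemma lt2 (hn : 3 ≤ n) : n - 2 < n := by omega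
lemma lt3 (hn : 3 ≤ n) (k : ℕ) (h : k < n - 2) : k < n := by omega
lemma R_surj (hn : 3 ≤ n) (q : Projectivization ℂ (Fin (n-2) → ℂ)) :
    ∃ x : Fin n → P1,
      ((∀ i : Fin n, i ≠ ⟨n-1, ltN1 n hn⟩ → x i ≠ x ⟨n-1, ltN1 n hn⟩) ∧
        ¬ (∀ i j : Fin n, i ≠ (⟨n-1, ltN1 n hn⟩ : Fin n) → j ≠ (⟨n-1, ltN1 n hn⟩ : Fin n) →
            x i = x j)) ∧ NormRel n hn x q := by
  induction q using Projectivization.ind with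
  | h u hu =>
    have main : ∀ (z : Fin n → ℂ) (x : Fin n → P1),
        x ⟨n-1, by omega⟩ = inf →
        (∀ i : Fin n, i ≠ (⟨n-1, by omega⟩ : Fin n) → x i = pt (z i)) →
        (∀ (k : ℕ) (h : k < n - 2), z ⟨k, by omega⟩ = u ⟨k, h⟩) →
        z ⟨n-2, by omega⟩ = 0 →
        ∃ x : Fin n → P1,
          ((∀ i : Fin n, i ≠ ⟨n-1, by omega⟩ → x i ≠ x ⟨n-1, by omega⟩) ∧
            ¬ (∀ i j : Fin n, i ≠ (⟨n-1, by omega⟩ : Fin n) →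
                j ≠ (⟨n-1, by omega⟩ : Fin n) → x i = x j)) ∧
          NormRel n hn x (Projectivization.mk ℂ u hu) := by
      intro z x hxlast hxi hz1 hzm
      have huvec : uvec n hn z = u := by
        funext j
        simp only [uvec]
        rw [hz1 j.1 j.2, hzm, sub_zero]
      have huz : uvec n hn z ≠ 0 := huvec ▸ hu
      obtain ⟨j, hj⟩ := Function.ne_iff.1 hu
      have hj2 := j.2
      have hmne : (⟨n-2, lt2 hn⟩ : Fin n) ≠ (⟨n-1, lt1 hn⟩ : Fin n) := by
        simp only [ne_eq, Fin.mk.injEq]; omega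
      have hjne : (⟨j.1, lt3 hn j.1 j.2⟩ : Fin n) ≠ (⟨n-1, lt1 hn⟩ : Fin n) := by
        simp only [ne_eq, Fin.mk.injEq]; omega
      have hp1 : ∀ i : Fin n, i ≠ (⟨n-1, by omega⟩ : Fin n) → x i ≠ x ⟨n-1, by omega⟩ := by
        intro i hi
        rw [hxi i hi, hxlast]; exact pt_ne_inf _
      have hp2 : ¬ (∀ i j : Fin n, i ≠ (⟨n-1, by omega⟩ : Fin n) →
          j ≠ (⟨n-1, by omega⟩ : Fin n) → x i = x j) := by
        intro hall'
        have hxx := hall' ⟨j.1, lt3 hn j.1 j.2⟩ ⟨n-2, lt2 hn⟩ hjne hmne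
        rw [hxi _ hjne, hxi _ hmne, hzm, hz1 j.1 j.2] at hxx
        exact hj (by simpa using pt_injective hxx)
      have hp3 : glAct 1 (x ⟨n-1, lt1 hn⟩) = inf := by rw [glAct_one]; exact hxlast
      have hp4 : ∀ i : Fin n, i ≠ (⟨n-1, lt1 hn⟩ : Fin n) → glAct 1 (x i) = pt (z i) := by
        intro i hi; rw [glAct_one]; exact hxi i hi
      have hp5 : Projectivization.mk ℂ u hu = Projectivization.mk ℂ (uvec n hn z) huz := by
        symm
        exact (Projectivization.mk_eq_mk_iff' ℂ _ _ _ _).2 ⟨1, by rw [one_smul, huvec]⟩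
      exact ⟨x, ⟨hp1, hp2⟩, 1, z, huz, hp3, hp4, hp5⟩
    exact main (fun i => if h : i.1 < n-2 then u ⟨i.1, h⟩ else 0)
      (fun i => if i = (⟨n-1, lt1 hn⟩ : Fin n) then inf
        else pt (if h : i.1 < n-2 then u ⟨i.1, h⟩ else 0))
      (if_pos rfl)
      (fun i hi => if_neg hi)
      (fun k h => dif_pos h)
      (dif_neg (lt_irrefl _))
end

lemma lt1' {n : ℕ} (hn : 3 ≤ n) : n - 1 < n := by omega
lemma lt2' {n : ℕ} (hn : 3 ≤ n) : n - 2 < n := by omega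
lemma lt0' {n : ℕ} (hn : 3 ≤ n) : 0 < n := by omega

lemma part_a (n : ℕ) (hn : 3 ≤ n) (w : Fin n → ℝ) (hw : ∀ i, 0 < w i)
    (hsum : ∑ i, w i = 2)
    (hlast : w ⟨n-1, lt1' hn⟩ < 1)
    (hbig : ∀ i : Fin n, i ≠ ⟨n-1, lt1' hn⟩ → 1 < w i + w ⟨n-1, lt1' hn⟩) :
    stableSet n w =
      { x : Fin n → P1 |
        (∀ i : Fin n, i ≠ ⟨n-1, lt1' hn⟩ → x i ≠ x ⟨n-1, lt1' hn⟩) ∧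
        ¬ (∀ i j : Fin n, i ≠ (⟨n-1, lt1' hn⟩ : Fin n) → j ≠ (⟨n-1, lt1' hn⟩ : Fin n) →
            x i = x j) } := by
  classical
  ext x
  simp only [stableSet, Set.mem_setOf_eq]
  constructor
  · intro hst
    constructor
    · intro i hi heq
      have hsub : {i, (⟨n-1, lt1' hn⟩ : Fin n)} ⊆
          Finset.univ.filter (fun k => x k = x ⟨n-1, lt1' hn⟩) := by
        intro k hk
        simp only [Finset.mem_insert, Finset.mem_singleton] at hk
        rcases hk with rfl | rfl <;> simp [Finset.mem_filter, heq]
      have hle := Finset.sum_le_sum_of_subset_of_nonneg hsub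
        (fun k _ _ => le_of_lt (hw k))
      rw [Finset.sum_pair hi] at hle
      have := hst (x ⟨n-1, lt1' hn⟩)
      have hb := hbig i hi
      linarith
    · intro hall
      have h0ne : (⟨0, lt0' hn⟩ : Fin n) ≠ (⟨n-1, lt1' hn⟩ : Fin n) := by
        simp only [ne_eq, Fin.mk.injEq]; omega
      have hsub : Finset.univ.erase (⟨n-1, lt1' hn⟩ : Fin n) ⊆
          Finset.univ.filter (fun k => x k = x ⟨0, lt0' hn⟩) := by
        intro k hk
        rw [Finset.mem_erase] at hk
        simp only [Finset.mem_filter, Finset.mem_univ, true_and]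
        exact hall k ⟨0, lt0' hn⟩ hk.1 h0ne
      have hle := Finset.sum_le_sum_of_subset_of_nonneg hsub
        (fun k _ _ => le_of_lt (hw k))
      have hsum2 : ∑ k ∈ Finset.univ.erase (⟨n-1, lt1' hn⟩ : Fin n), w k
          + w ⟨n-1, lt1' hn⟩ = 2 := by
        rw [Finset.sum_erase_add _ _ (Finset.mem_univ _), hsum]
      have := hst (x ⟨0, lt0' hn⟩)
      linarith
  · rintro ⟨h1, h2⟩ p
    by_cases hp : p = x ⟨n-1, lt1' hn⟩
    · subst hp
      have hfil : Finset.univ.filter (fun k => x k = x ⟨n-1, lt1' hn⟩)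
          = {(⟨n-1, lt1' hn⟩ : Fin n)} := by
        ext k
        simp only [Finset.mem_filter, Finset.mem_univ, true_and, Finset.mem_singleton]
        constructor
        · intro hk
          by_contra hne
          exact h1 k hne hk
        · rintro rfl; rfl
      rw [hfil, Finset.sum_singleton]
      exact hlast
    · push_neg at h2
      obtain ⟨i0, j0, hi0, hj0, hne⟩ := h2
      obtain ⟨k, hklast, hkp⟩ : ∃ k : Fin n, k ≠ (⟨n-1, lt1' hn⟩ : Fin n) ∧ x k ≠ p := by
        by_cases hc : x i0 = p
        · exact ⟨j0, hj0, fun h => hne (hc.trans h.symm)⟩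
        · exact ⟨i0, hi0, hc⟩
      have hsub : Finset.univ.filter (fun k => x k = p) ⊆
          (Finset.univ.erase (⟨n-1, lt1' hn⟩ : Fin n)).erase k := by
        intro i hi
        rw [Finset.mem_filter] at hi
        rw [Finset.mem_erase, Finset.mem_erase]
        refine ⟨fun h => hkp (h ▸ hi.2), fun h => hp ?_, Finset.mem_univ _⟩
        rw [← hi.2, h]
      have hle := Finset.sum_le_sum_of_subset_of_nonneg hsub
        (fun k _ _ => le_of_lt (hw k))
      have hmem : k ∈ Finset.univ.erase (⟨n-1, lt1' hn⟩ : Fin n) :=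
        Finset.mem_erase.2 ⟨hklast, Finset.mem_univ _⟩
      have hsum2 : ∑ i ∈ (Finset.univ.erase (⟨n-1, lt1' hn⟩ : Fin n)).erase k, w i + w k
          = ∑ i ∈ Finset.univ.erase (⟨n-1, lt1' hn⟩ : Fin n), w i :=
        Finset.sum_erase_add _ _ hmem
      have hsum3 : ∑ i ∈ Finset.univ.erase (⟨n-1, lt1' hn⟩ : Fin n), w i
          + w ⟨n-1, lt1' hn⟩ = 2 := by
        rw [Finset.sum_erase_add _ _ (Finset.mem_univ _), hsum]
      have hb := hbig k hklast
      linarith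


/-- for `w` in the chamber `w_n < 1`, `w_i + w_n > 1`, the stable set
consists of the configurations with `x_i ≠ x_n` and not all of `x_1,…,x_{n-1}` equal,
and its `GL(2,ℂ)`-quotient is in bijection with `ℙ^{n-3}`. -/
theorem stmt_10 (n : ℕ) (hn : 3 ≤ n) (w : Fin n → ℝ) (hw : ∀ i, 0 < w i)
    (hsum : ∑ i, w i = 2)
    (hlast : w ⟨n-1, by omega⟩ < 1)
    (hbig : ∀ i : Fin n, i ≠ ⟨n-1, by omega⟩ → 1 < w i + w ⟨n-1, by omega⟩) :
    stableSet n w =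
      { x : Fin n → P1 |
        (∀ i : Fin n, i ≠ ⟨n-1, by omega⟩ → x i ≠ x ⟨n-1, by omega⟩) ∧
        ¬ (∀ i j : Fin n, i ≠ (⟨n-1, by omega⟩ : Fin n) → j ≠ (⟨n-1, by omega⟩ : Fin n) →
            x i = x j) } ∧
    ∃ f : Quotient (glSetoid (stableSet n w)) → Projectivization ℂ (Fin (n-2) → ℂ),
      Function.Bijective f := by
  have hseteq := part_a n hn w hw hsum hlast hbig
  refine ⟨hseteq, ?_⟩
  have hex : ∀ x : (stableSet n w), ∃ q, NormRel n hn x.1 q := by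
    rintro ⟨x, hx⟩
    rw [hseteq] at hx
    exact R_exists hx.1 hx.2
  set φ : (stableSet n w) → Projectivization ℂ (Fin (n-2) → ℂ) :=
    fun x => Classical.choose (hex x) with hφdef
  have hφ : ∀ x, NormRel n hn x.1 (φ x) := fun x => Classical.choose_spec (hex x)
  have hwd : ∀ a b : (stableSet n w), (glSetoid (stableSet n w)).r a b → φ a = φ b := by
    intro a b hab
    exact R_unique (hφ a) (hφ b) hab
  refine ⟨Quotient.lift φ hwd, ?_, ?_⟩
  · intro qa qb
    induction qa using Quotient.ind with
    | _ a =>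
      induction qb using Quotient.ind with
      | _ b =>
        intro h
        have h' : φ a = φ b := h
        exact Quotient.sound (R_inj (h' ▸ hφ a) (hφ b))
  · intro q
    obtain ⟨x, hdesc, hR⟩ := R_surj hn q
    have hxS : x ∈ stableSet n w := by rw [hseteq]; exact hdesc
    refine ⟨Quotient.mk _ ⟨x, hxS⟩, ?_⟩
    exact R_unique (hφ ⟨x, hxS⟩) hR ⟨1, fun i => glAct_one _⟩
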